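/- Let V be the free R-module on ℕ with basis (e_n), U(e_n) = e_{n+1}, D(e_0) = 0, D(e_{n+1}) = e_n. For every R-linear endomorphism φ of V there exists a sequence of polynomials (P_n) in R[x] such that for every m ∈ ℕ, φ(e_m) = Σ_{k=0}^{m} P_k(U)(D^k(e_m)), i.e. φ is the pointwise sum of the summable family (P_n(U) ∘ D^n). -/
import Mathlib


noncomputable def e (R : Type*) [CommRing R] (n : ℕ) : ℕ →₀ R := Finsupp.single n 1

noncomputable def U (R : Type*) [CommRing R] : Module.End R (ℕ →₀ R) :=
  Finsupp.lmapDomain R R (· + 1)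

noncomputable def D (R : Type*) [CommRing R] : Module.End R (ℕ →₀ R) :=
  Finsupp.lsum ℕ fun n => match n with
    | 0 => 0
    | m + 1 => Finsupp.lsingle m

noncomputable def toPoly {R : Type*} [CommRing R] (v : ℕ →₀ R) : Polynomial R :=
  v.sum fun i c => Polynomial.C c * Polynomial.X ^ i

lemma U_e {R : Type*} [CommRing R] (n : ℕ) : U R (e R n) = e R (n + 1) := by
  simp [U, e, Finsupp.mapDomain_single]

lemma U_pow_e {R : Type*} [CommRing R] (i : ℕ) : (U R ^ i) (e R 0) = e R i := by
  induction i with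
  | zero => simp
  | succ n ih => rw [pow_succ', Module.End.mul_apply, ih, U_e]

lemma D_e_succ {R : Type*} [CommRing R] (n : ℕ) : D R (e R (n + 1)) = e R n := by
  simp [D, e, Finsupp.sum_single_index]

lemma D_pow_e {R : Type*} [CommRing R] (m : ℕ) : (D R ^ m) (e R m) = e R 0 := by
  induction m with
  | zero => simp
  | succ n ih => rw [pow_succ, Module.End.mul_apply, D_e_succ, ih]

lemma aeval_toPoly {R : Type*} [CommRing R] (v : ℕ →₀ R) :
    (Polynomial.aeval (U R) (toPoly v)) (e R 0) = v := by
  rw [toPoly, Finsupp.sum, map_sum]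
  rw [LinearMap.coe_sum, Finset.sum_apply]
  have : ∀ i ∈ v.support, (Polynomial.aeval (U R) (Polynomial.C (v i) * Polynomial.X ^ i))
      (e R 0) = Finsupp.single i (v i) := by
    intro i _
    rw [map_mul, map_pow, Polynomial.aeval_C, Polynomial.aeval_X]
    simp only [Module.End.mul_apply, Module.algebraMap_end_apply, LinearMap.smul_apply,
      U_pow_e]
    rw [e, Finsupp.smul_single', mul_one]
  rw [Finset.sum_congr rfl this]
  exact Finsupp.sum_single v

noncomputable def Pseq {R : Type*} [CommRing R] (φ : Module.End R (ℕ →₀ R)) :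
    ℕ → Polynomial R
  | n => toPoly (φ (e R n) - ∑ k ∈ (Finset.range n).attach,
      (Polynomial.aeval (U R) (Pseq φ k)) ((D R ^ (k : ℕ)) (e R n)))
  decreasing_by exact Finset.mem_range.mp k.2

/-- Every linear endomorphism `φ` of `V` decomposes as a pointwise sum
`φ = Σ_n P_n(U) ∘ Dⁿ` for some sequence of polynomials `(P_n)`. -/
theorem endo_decomposition_exists (R : Type*) [CommRing R]
    (φ : Module.End R (ℕ →₀ R)) :
    ∃ P : ℕ → Polynomial R, ∀ m : ℕ,
      φ (e R m) = ∑ k ∈ Finset.range (m + 1),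
        (Polynomial.aeval (U R) (P k)) ((D R ^ k) (e R m)) := by
  refine ⟨Pseq φ, fun m => ?_⟩
  rw [Finset.sum_range_succ, D_pow_e]
  rw [Pseq, aeval_toPoly]
  rw [Finset.sum_attach (Finset.range m)
    (fun k => (Polynomial.aeval (U R) (Pseq φ k)) ((D R ^ k) (e R m)))]
  abel
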